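/- arXiv:1207.0092 — 2 statements merged into one kernel-verified Lean document; each statement's English description precedes it below -/
import Mathlib

section
/- Let (Aₙ) be a sequence of subsets of ℝ², each of which is either empty or compact, convex, and of positive Lebesgue measure. Suppose (Aₙ) is Cauchy for d, i.e., for every ε > 0 there exists N such that λ(A_m Δ A_n) < ε for all m, n ≥ N. Then there exists a set A ⊆ ℝ², either empty or compact, convex, and of positive Lebesgue measure, such that λ(Aₙ Δ A) → 0 as n → ∞. (The space Ĉ of compact convex subsets of ℝ² of positive measure together with ∅, equipped with d, is a complete metric space.) -/
open MeasureTheory Set Metric Filter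

noncomputable section

abbrev Plane := EuclideanSpace ℝ (Fin 2)

/-- Membership in $\hat{\mathcal C}$: the empty set, or a compact convex set of positive
Lebesgue measure. -/
def InChat (A : Set Plane) : Prop :=
  A = ∅ ∨ (IsCompact A ∧ Convex ℝ A ∧ 0 < volume A)

lemma ofReal_half_pow (k : ℕ) : ENNReal.ofReal ((1/2:ℝ)^k) = (2⁻¹:ENNReal)^k := by
  rw [ENNReal.ofReal_pow (by norm_num), show (1/2:ℝ) = (2:ℝ)⁻¹ by norm_num,
    ENNReal.ofReal_inv_of_pos (by norm_num), ENNReal.ofReal_ofNat]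

/-- A ball around a convex-combination point is in the convex set. -/
lemma ball_comb_subset {s : Set Plane} (hc : Convex ℝ s) {x y : Plane} {r t : ℝ}
    (hball : ball x r ⊆ s) (hy : y ∈ s) (ht0 : 0 ≤ t) (ht : t ≤ 1/2) :
    ball (x + t • (y - x)) (r/2) ⊆ s := by
  intro z hz
  have h1t : (0:ℝ) < 1 - t := by linarith
  set c : Plane := x + t • (y - x) with hc'
  set w : Plane := x + (1 - t)⁻¹ • (z - c) with hw'
  have hzw : (1 - t) • w + t • y = z := by
    have : (1 - t) • ((1 - t)⁻¹ • (z - c)) = z - c := by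
      rw [smul_smul, mul_inv_cancel₀ h1t.ne', one_smul]
    rw [hw', smul_add, this, hc']
    module
  have hwball : w ∈ ball x r := by
    rw [mem_ball, dist_eq_norm]
    have : w - x = (1 - t)⁻¹ • (z - c) := by rw [hw']; abel
    rw [this, norm_smul]
    have hzc : ‖z - c‖ < r / 2 := by
      rw [← dist_eq_norm]; exact hz
    have hr : 0 < r := by
      by_contra h
      push_neg at h
      have : ‖z - c‖ < 0 := by linarith
      exact absurd this (not_lt.2 (norm_nonneg _))
    have hinv : |(1 - t)⁻¹| ≤ 2 := by
      rw [abs_of_pos (inv_pos.2 h1t)]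
      rw [inv_le_comm₀ h1t (by norm_num)]
      linarith
    calc |(1-t)⁻¹| * ‖z - c‖ ≤ 2 * ‖z - c‖ := by
          apply mul_le_mul_of_nonneg_right hinv (norm_nonneg _)
      _ < 2 * (r/2) := by apply mul_lt_mul_of_pos_left hzc; norm_num
      _ = r := by ring
  rw [← hzw]
  exact hc (hball hwball) hy (by linarith) ht0 (by ring)

lemma bounded_of_convex_measure {s : Set Plane} (hc : Convex ℝ s) (h0 : 0 < volume s)
    (hfin : volume s ≠ ⊤) : Bornology.IsBounded s := by
  -- interior nonempty
  have hspan : affineSpan ℝ s = ⊤ := by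
    by_contra h
    have := Measure.addHaar_affineSubspace (volume : Measure Plane) _ h
    exact absurd (measure_mono_null (subset_affineSpan ℝ s) this) h0.ne'
  obtain ⟨x, hx⟩ := (hc.interior_nonempty_iff_affineSpan_eq_top).2 hspan
  obtain ⟨r, hr, hball⟩ := Metric.isOpen_iff.1 isOpen_interior x hx
  replace hball : ball x r ⊆ s := hball.trans interior_subset
  by_contra hub
  -- unbounded: find far point, pack disjoint balls
  set v : ENNReal := volume (ball (0:Plane) (r/2)) with hv
  have hvpos : 0 < v := measure_ball_pos volume 0 (by linarith)
  have hvfin : v ≠ ⊤ := (measure_ball_lt_top).ne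
  obtain ⟨k, hk⟩ := ENNReal.exists_nat_gt (ENNReal.div_lt_top hfin hvpos.ne').ne
  have hks : volume s < k * v := by
    rwa [ENNReal.div_lt_iff (Or.inl hvpos.ne') (Or.inl hvfin)] at hk
  -- get y ∈ s with dist y x > 2*k*r
  have : ¬ s ⊆ closedBall x (2*k*r) := fun h => hub ((isBounded_closedBall).subset h)
  obtain ⟨y, hy, hyd⟩ := not_subset.1 this
  rw [mem_closedBall, not_le] at hyd
  set D : ℝ := dist y x with hD
  have hDpos : 0 < D := lt_of_le_of_lt (by positivity) hyd
  -- centers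
  set c : ℕ → Plane := fun i => x + ((i * r) / D) • (y - x) with hcdef
  have hsub : ∀ i : ℕ, i < k → ball (c i) (r/2) ⊆ s := by
    intro i hi
    apply ball_comb_subset hc hball hy (by positivity)
    rw [div_le_iff₀ hDpos]
    have h1 : (i:ℝ) * r ≤ (k:ℝ) * r := by
      apply mul_le_mul_of_nonneg_right _ hr.le
      exact_mod_cast hi.le
    nlinarith
  have hdisj : (↑(Finset.range k) : Set ℕ).PairwiseDisjoint (fun i => ball (c i) (r/2)) := by
    intro i _ j _ hij
    apply Set.disjoint_left.2
    intro z hzi hzj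
    have hdist : dist (c i) (c j) = |(i:ℝ) - j| * r := by
      rw [hcdef]
      simp only [dist_eq_norm]
      have heq : (x + ((i * r) / D) • (y - x)) - (x + ((j * r) / D) • (y - x))
          = (((i:ℝ) - j) * r / D) • (y - x) := by module
      rw [heq, norm_smul, Real.norm_eq_abs,
        show ‖y - x‖ = D by rw [hD, dist_eq_norm],
        abs_div, abs_of_pos hDpos, div_mul_cancel₀ _ hDpos.ne',
        abs_mul, abs_of_nonneg hr.le]
    have h1 : (1:ℝ) ≤ |(i:ℝ) - j| := by
      rcases hij.lt_or_gt with h | h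
      · have : (i:ℝ) + 1 ≤ j := by exact_mod_cast h
        rw [abs_sub_comm, abs_of_nonneg (by linarith)]; linarith
      · have : (j:ℝ) + 1 ≤ i := by exact_mod_cast h
        rw [abs_of_nonneg (by linarith)]; linarith
    have : dist z (c i) + dist z (c j) < r := by
      rw [mem_ball] at hzi hzj; linarith
    have htri := dist_triangle (c i) z (c j)
    rw [dist_comm (c i) z] at htri
    rw [hdist] at htri
    nlinarith
  have hmeas := measure_biUnion_finset (μ := volume) hdisj (fun i _ => measurableSet_ball)
  have hsum : ∑ i ∈ Finset.range k, volume (ball (c i) (r/2)) = k * v := by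
    rw [hv]
    rw [Finset.sum_congr rfl (fun i _ => Measure.addHaar_ball_center volume (c i) (r/2))]
    simp [Finset.sum_const, nsmul_eq_mul]
  have hle : (k : ENNReal) * v ≤ volume s := by
    rw [← hsum, ← hmeas]
    apply measure_mono
    intro z hz
    simp only [Finset.mem_coe, Finset.mem_range, mem_iUnion] at hz
    obtain ⟨i, hi, hzi⟩ := hz
    exact hsub i hi hzi
  exact absurd hks (not_lt.2 hle)

/-- $(\hat{\mathcal C}, d)$ is complete: every Cauchy sequence for the
symmetric-difference distance has a limit in $\hat{\mathcal C}$. -/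
theorem Chat_complete (A : ℕ → Set Plane) (hA : ∀ n, InChat (A n))
    (hCauchy : ∀ ε : ℝ, 0 < ε → ∃ N : ℕ, ∀ m n : ℕ, N ≤ m → N ≤ n →
      volume (symmDiff (A m) (A n)) < ENNReal.ofReal ε) :
    ∃ B : Set Plane, InChat B ∧
      Tendsto (fun n => volume (symmDiff (A n) B)) atTop (nhds 0) := by
  classical
  by_cases hzero : ∀ ε : ℝ, 0 < ε → ∃ N : ℕ, ∀ n : ℕ, N ≤ n → volume (A n) < ENNReal.ofReal ε
  · refine ⟨∅, Or.inl rfl, ?_⟩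
    have hAe : ∀ n, symmDiff (A n) ∅ = A n := by
      intro n; simp [Set.symmDiff_def]
    simp only [hAe]
    rw [ENNReal.tendsto_nhds_zero]
    intro δ hδ
    rcases le_or_gt 1 δ with h1 | h1
    · obtain ⟨N, hN⟩ := hzero 1 one_pos
      filter_upwards [eventually_ge_atTop N] with n hn
      calc volume (A n) ≤ ENNReal.ofReal 1 := (hN n hn).le
        _ ≤ 1 := by simp
        _ ≤ δ := h1
    · have hδtop : δ ≠ ⊤ := by
        intro h; rw [h] at h1; exact absurd h1 (by simp)
      obtain ⟨N, hN⟩ := hzero δ.toReal (ENNReal.toReal_pos hδ.ne' hδtop)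
      filter_upwards [eventually_ge_atTop N] with n hn
      have h2 := hN n hn
      rw [ENNReal.ofReal_toReal hδtop] at h2
      exact h2.le
  · push_neg at hzero
    obtain ⟨ε, hε, hfreq⟩ := hzero
    obtain ⟨N₀, hN₀⟩ := hCauchy (ε/2) (by linarith)
    -- uniform lower bound on volumes
    have hlow : ∀ m, N₀ ≤ m → ENNReal.ofReal (ε/2) ≤ volume (A m) := by
      obtain ⟨n₀, hn₀N, hn₀⟩ := hfreq N₀
      intro m hm
      have h1 : volume (A n₀) ≤ volume (A m) + volume (symmDiff (A n₀) (A m)) := by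
        refine le_trans (measure_mono ?_) (measure_union_le _ _)
        intro x hx
        by_cases h : x ∈ A m
        · exact Or.inl h
        · exact Or.inr (Or.inl ⟨hx, h⟩)
      have h2 := hN₀ n₀ m hn₀N hm
      have h3 : ENNReal.ofReal ε ≤ volume (A m) + ENNReal.ofReal (ε/2) :=
        le_trans hn₀ (h1.trans (add_le_add le_rfl h2.le))
      have h4 : ENNReal.ofReal ε - ENNReal.ofReal (ε/2) ≤ volume (A m) :=
        tsub_le_iff_right.2 h3
      rwa [← ENNReal.ofReal_sub _ (by linarith), show ε - ε/2 = ε/2 by ring] at h4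
    have hε2pos : (0:ENNReal) < ENNReal.ofReal (ε/2) := ENNReal.ofReal_pos.2 (by linarith)
    -- compactness/convexity of tail sets
    have hcomp : ∀ m, N₀ ≤ m → IsCompact (A m) ∧ Convex ℝ (A m) := by
      intro m hm
      rcases hA m with h | h
      · exfalso
        have := hlow m hm
        rw [h, measure_empty] at this
        exact absurd this (not_le.2 hε2pos)
      · exact ⟨h.1, h.2.1⟩
    -- fast subsequence
    have hNk : ∀ k : ℕ, ∃ N, ∀ m n, N ≤ m → N ≤ n →
        volume (symmDiff (A m) (A n)) < (2⁻¹:ENNReal)^k := by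
      intro k
      obtain ⟨N, hN⟩ := hCauchy ((1/2)^k) (by positivity)
      exact ⟨N, fun m n hm hn => by rw [← ofReal_half_pow]; exact hN m n hm hn⟩
    choose Nk hNk using hNk
    set φ : ℕ → ℕ := fun k => Nat.rec (max N₀ (Nk 0)) (fun k ih => max (ih + 1) (Nk (k+1))) k
      with hφdef
    have hφsucc : ∀ k, φ k < φ (k+1) :=
      fun k => lt_of_lt_of_le (Nat.lt_succ_self _) (le_max_left _ _)
    have hφmono : Monotone φ := monotone_nat_of_le_succ (fun k => (hφsucc k).le)
    have hφN : ∀ k, Nk k ≤ φ k := by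
      intro k; cases k with
      | zero => exact le_max_right _ _
      | succ m => exact le_max_right _ _
    have hφN₀ : ∀ k, N₀ ≤ φ k :=
      fun k => le_trans (le_max_left _ _) (hφmono (Nat.zero_le k))
    have hpair : ∀ k n, φ k ≤ n →
        volume (symmDiff (A n) (A (φ k))) < (2⁻¹:ENNReal)^k :=
      fun k n hn => hNk k n (φ k) (le_trans (hφN k) hn) (hφN k)
    -- the candidate limit set
    set C : ℕ → Set Plane := fun k => ⋂ j, A (φ (k + j)) with hCdef
    have hCsubA : ∀ k j, C k ⊆ A (φ (k + j)) := fun k j => iInter_subset _ j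
    have hCmono : Monotone C := by
      intro k k' hkk' x hx
      rw [hCdef] at hx ⊢
      rw [mem_iInter] at hx ⊢
      intro j
      have := hx ((k' - k) + j)
      rwa [show k + ((k' - k) + j) = k' + j by omega] at this
    have hCconv : ∀ k, Convex ℝ (C k) :=
      fun k => convex_iInter (fun j => (hcomp _ (hφN₀ _)).2)
    set B₀ : Set Plane := ⋃ k, C k with hB₀def
    have hB₀conv : Convex ℝ B₀ := by
      intro x hx y hy a b ha hb hab
      rw [hB₀def, mem_iUnion] at hx hy ⊢
      obtain ⟨k₁, hk₁⟩ := hx; obtain ⟨k₂, hk₂⟩ := hy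
      exact ⟨max k₁ k₂, hCconv _ (hCmono (le_max_left _ _) hk₁)
        (hCmono (le_max_right _ _) hk₂) ha hb hab⟩
    -- Estimate 1
    have hest1 : ∀ k, volume (A (φ k) \ C k) ≤ 2 * (2⁻¹:ENNReal)^k := by
      intro k
      have hsub : A (φ k) \ C k ⊆ ⋃ j, (A (φ (k + j)) \ A (φ (k + j + 1))) := by
        rintro x ⟨hxA, hxC⟩
        rw [hCdef, mem_iInter] at hxC
        push_neg at hxC
        have hex : ∃ j, x ∉ A (φ (k + j)) := hxC
        have hj₀ : x ∉ A (φ (k + Nat.find hex)) := Nat.find_spec hex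
        have hj₀pos : Nat.find hex ≠ 0 := by
          intro h
          rw [h] at hj₀
          exact hj₀ (by simpa using hxA)
        obtain ⟨m, hm⟩ := Nat.exists_eq_succ_of_ne_zero hj₀pos
        have hxm : x ∈ A (φ (k + m)) := by
          by_contra h
          exact Nat.find_min hex (by omega) h
        refine mem_iUnion.2 ⟨m, hxm, ?_⟩
        rw [show k + m + 1 = k + Nat.find hex by omega]
        exact hj₀
      calc volume (A (φ k) \ C k)
          ≤ ∑' j, volume (A (φ (k + j)) \ A (φ (k + j + 1))) :=
            le_trans (measure_mono hsub) (measure_iUnion_le _)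
        _ ≤ ∑' j : ℕ, (2⁻¹:ENNReal)^(k+j) := by
            apply ENNReal.tsum_le_tsum
            intro j
            refine le_trans (measure_mono ?_) (hpair (k+j) (φ (k+j+1))
              (hφmono (Nat.le_succ _))).le
            intro x hx
            exact Or.inr ⟨hx.1, hx.2⟩
        _ = (2⁻¹:ENNReal)^k * ∑' j : ℕ, (2⁻¹:ENNReal)^j := by
            simp_rw [pow_add]; rw [ENNReal.tsum_mul_left]
        _ = 2 * (2⁻¹:ENNReal)^k := by
            rw [ENNReal.tsum_geometric]
            rw [show (1 - 2⁻¹ : ENNReal) = 2⁻¹ by norm_num]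
            rw [inv_inv, mul_comm]
    -- Estimate 2
    have hest2 : ∀ k, volume (B₀ \ A (φ k)) ≤ (2⁻¹:ENNReal)^k := by
      intro k
      have heq : B₀ \ A (φ k) = ⋃ m, (C m \ A (φ k)) := by
        rw [hB₀def, iUnion_diff]
      rw [heq, Directed.measure_iUnion ?_]
      · apply iSup_le
        intro m
        refine le_trans (measure_mono ?_) (hpair k (φ (m + k))
          (hφmono (Nat.le_add_left _ _))).le
        intro x hx
        exact Or.inl ⟨hCsubA m k hx.1, hx.2⟩
      · intro m m'
        exact ⟨max m m', diff_subset_diff_left (hCmono (le_max_left _ _)),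
          diff_subset_diff_left (hCmono (le_max_right _ _))⟩
    -- symmetric difference with B₀
    have hCsubB₀ : ∀ k, C k ⊆ B₀ := fun k => subset_iUnion C k
    have hsymm : ∀ k, volume (symmDiff (A (φ k)) B₀) ≤ 3 * (2⁻¹:ENNReal)^k := by
      intro k
      have hsub : symmDiff (A (φ k)) B₀ ⊆ (A (φ k) \ C k) ∪ (B₀ \ A (φ k)) := by
        intro x hx
        rcases Set.mem_symmDiff.1 hx with ⟨h1, h2⟩ | ⟨h1, h2⟩
        · exact Or.inl ⟨h1, fun h => h2 (hCsubB₀ k h)⟩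
        · exact Or.inr ⟨h1, h2⟩
      calc volume (symmDiff (A (φ k)) B₀)
          ≤ volume (A (φ k) \ C k) + volume (B₀ \ A (φ k)) :=
            le_trans (measure_mono hsub) (measure_union_le _ _)
        _ ≤ 2 * (2⁻¹:ENNReal)^k + (2⁻¹:ENNReal)^k := add_le_add (hest1 k) (hest2 k)
        _ = 3 * (2⁻¹:ENNReal)^k := by ring
    -- tendsto for B₀
    have hpow : ∀ c : ENNReal, c ≠ ⊤ → Tendsto (fun k => c * (2⁻¹:ENNReal)^k) atTop (nhds 0) := by
      intro c hc
      have h := ENNReal.tendsto_pow_atTop_nhds_zero_of_lt_one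
        (by norm_num : (2⁻¹:ENNReal) < 1)
      simpa using ENNReal.Tendsto.const_mul h (Or.inr hc)
    have htendB₀ : Tendsto (fun n => volume (symmDiff (A n) B₀)) atTop (nhds 0) := by
      rw [ENNReal.tendsto_nhds_zero]
      intro δ hδ
      obtain ⟨k, hk⟩ : ∃ k, 4 * (2⁻¹:ENNReal)^k < δ :=
        ((hpow 4 (by norm_num)).eventually (gt_mem_nhds hδ)).exists
      filter_upwards [eventually_ge_atTop (φ k)] with n hn
      calc volume (symmDiff (A n) B₀)
          ≤ volume (symmDiff (A n) (A (φ k))) + volume (symmDiff (A (φ k)) B₀) := by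
            refine le_trans (measure_mono ?_) (measure_union_le _ _)
            exact symmDiff_triangle _ (A (φ k)) _
        _ ≤ (2⁻¹:ENNReal)^k + 3 * (2⁻¹:ENNReal)^k :=
            add_le_add (hpair k n hn).le (hsymm k)
        _ = 4 * (2⁻¹:ENNReal)^k := by ring
        _ ≤ δ := hk.le
    -- pass to the closure
    set B : Set Plane := closure B₀ with hBdef
    have hB₀B : B₀ ⊆ B := subset_closure
    have hBconv : Convex ℝ B := hB₀conv.closure
    have hBB₀ : volume (B \ B₀) = 0 := by
      refine measure_mono_null ?_ (hB₀conv.addHaar_frontier volume)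
      intro x hx
      exact ⟨hx.1, fun h => hx.2 (interior_subset h)⟩
    have hsymmB : ∀ n, volume (symmDiff (A n) B) ≤ volume (symmDiff (A n) B₀) := by
      intro n
      calc volume (symmDiff (A n) B)
          ≤ volume (symmDiff (A n) B₀) + volume (symmDiff B₀ B) := by
            refine le_trans (measure_mono ?_) (measure_union_le _ _)
            exact symmDiff_triangle _ B₀ _
        _ = volume (symmDiff (A n) B₀) := by
            rw [symmDiff_of_le hB₀B, hBB₀, add_zero]
    have htendB : Tendsto (fun n => volume (symmDiff (A n) B)) atTop (nhds 0) :=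
      tendsto_of_tendsto_of_tendsto_of_le_of_le tendsto_const_nhds htendB₀
        (fun n => zero_le) hsymmB
    -- positivity of the limit volume
    have hBpos : 0 < volume B := by
      obtain ⟨k, hk⟩ : ∃ k, 3 * (2⁻¹:ENNReal)^k < ENNReal.ofReal (ε/2) :=
        ((hpow 3 (by norm_num)).eventually (gt_mem_nhds hε2pos)).exists
      by_contra h
      push_neg at h
      rw [le_zero_iff] at h
      have h1 : ENNReal.ofReal (ε/2) ≤ volume (A (φ k)) := hlow _ (hφN₀ k)
      have h2 : volume (A (φ k)) ≤ volume B + volume (symmDiff (A (φ k)) B) := by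
        refine le_trans (measure_mono ?_) (measure_union_le _ _)
        intro x hx
        by_cases hxB : x ∈ B
        · exact Or.inl hxB
        · exact Or.inr (Set.mem_symmDiff.2 (Or.inl ⟨hx, hxB⟩))
      have h3 : volume (symmDiff (A (φ k)) B) ≤ 3 * (2⁻¹:ENNReal)^k :=
        (hsymmB (φ k)).trans (hsymm k)
      have : ENNReal.ofReal (ε/2) < ENNReal.ofReal (ε/2) :=
        lt_of_le_of_lt (h1.trans (h2.trans (by rw [h, zero_add]; exact h3))) hk
      exact absurd this (lt_irrefl _)
    -- finiteness of the limit volume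
    have hBfin : volume B ≠ ⊤ := by
      have h2 : volume B ≤ volume (A (φ 0)) + volume (symmDiff (A (φ 0)) B) := by
        refine le_trans (measure_mono ?_) (measure_union_le _ _)
        intro x hx
        by_cases hxA : x ∈ A (φ 0)
        · exact Or.inl hxA
        · exact Or.inr (Set.mem_symmDiff.2 (Or.inr ⟨hx, hxA⟩))
      refine ne_top_of_le_ne_top ?_ h2
      apply ENNReal.add_ne_top.2
      constructor
      · exact ((hcomp _ (hφN₀ 0)).1.measure_lt_top).ne
      · refine ne_top_of_le_ne_top ?_ ((hsymmB (φ 0)).trans (hsymm 0))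
        simp
    have hBcompact : IsCompact B :=
      isCompact_of_isClosed_isBounded isClosed_closure
        (bounded_of_convex_measure hBconv hBpos hBfin)
    exact ⟨B, Or.inr ⟨hBcompact, hBconv, hBpos⟩, htendB⟩
end
end

section
/- Let A ⊆ ℝ² be a convex measurable set, let x ∈ ℝ² and r > 0 be such that the closed ball B̄(x, r) is contained in A, and let a ∈ A. Then λ(A) ≥ r·‖a − x‖. (A convex set containing a fixed disc and a far-away point contains a triangle of proportionally large area.) -/
open MeasureTheory Set Metric

noncomputable section

/-- A convex set containing a closed disc of radius `r` and a point `a` has measure at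
least `r·‖a − x‖`: it contains an isosceles triangle with base a diameter of the disc
and apex `a`. -/
theorem convex_measure_ge_of_ball_subset (A : Set Plane) (hm : MeasurableSet A)
    (hconv : Convex ℝ A) (x : Plane) (r : ℝ) (hr : 0 < r)
    (hball : closedBall x r ⊆ A) (a : Plane) (ha : a ∈ A) :
    ENNReal.ofReal (r * ‖a - x‖) ≤ volume A := by
  set d : ℝ := ‖a - x‖ with hd
  rcases eq_or_lt_of_le (norm_nonneg (a - x)) with h0 | hdpos
  · rw [hd, ← h0, mul_zero, ENNReal.ofReal_zero]; exact zero_le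
  -- unit vector u in direction a - x, extend to orthonormal basis
  set u : Plane := d⁻¹ • (a - x) with hu
  have hune : ‖u‖ = 1 := by
    rw [hu, norm_smul, norm_inv, Real.norm_eq_abs, abs_of_pos hdpos, ← hd,
      inv_mul_cancel₀ hdpos.ne']
  have hortho : Orthonormal ℝ (({0} : Set (Fin 2)).restrict ![u, 0]) := by
    constructor
    · rintro ⟨i, hi⟩
      simp only [Set.mem_singleton_iff] at hi
      subst hi
      exact hune
    · rintro ⟨i, hi⟩ ⟨j, hj⟩ hij
      simp only [Set.mem_singleton_iff] at hi hj
      exact absurd (Subtype.ext (hi.trans hj.symm)) hij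
  obtain ⟨b, hb⟩ := hortho.exists_orthonormalBasis_extension_of_card_eq
    (by simp [finrank_euclideanSpace])
  have hb0 : b 0 = u := by simpa using hb 0 rfl
  set v : Plane := b 1 with hv
  have hax : a = x + d • u := by
    rw [hu, smul_smul, mul_inv_cancel₀ hdpos.ne', one_smul]
    abel
  -- the map G
  set ψ : ℝ × ℝ → EuclideanSpace ℝ (Fin 2) := fun p =>
    (MeasurableEquiv.toLp 2 (Fin 2 → ℝ)) (MeasurableEquiv.finTwoArrow.symm p)
  set G : ℝ × ℝ → Plane := fun p => x + b.repr.symm (ψ p) with hG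
  have hGmp : MeasurePreserving G volume volume := by
    exact (measurePreserving_add_left volume x).comp
      (b.measurePreserving_repr_symm.comp
        (((EuclideanSpace.volume_preserving_symm_measurableEquiv_toLp (Fin 2)).symm).comp
          ((volume_preserving_finTwoArrow ℝ).symm)))
  have hGapp : ∀ s t : ℝ, G (s, t) = x + s • u + t • v := by
    intro s t
    have : b.repr.symm (ψ (s, t)) = s • u + t • v := by
      rw [← b.sum_repr_symm]
      simp [ψ, Fin.sum_univ_two, hb0, hv, MeasurableEquiv.coe_toLp,
        MeasurableEquiv.finTwoArrow]
    rw [hG]; simp only [this]; abel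
  -- the triangle region
  set f : ℝ → ℝ := fun s => -(r * (1 - s / d)) with hf
  set g : ℝ → ℝ := fun s => r * (1 - s / d) with hg
  set T : Set (ℝ × ℝ) := regionBetween f g (Ioc 0 d) with hT
  have hsub : T ⊆ G ⁻¹' A := by
    rintro ⟨s, t⟩ ⟨hs, ht⟩
    simp only [Set.mem_preimage]
    rw [hGapp]
    simp only [hf, hg, Set.mem_Ioo] at ht
    have hsd : s < d := by
      rcases lt_or_eq_of_le hs.2 with h | h
      · exact h
      · exfalso; rw [show s = d from h] at ht
        simp [div_self (show d ≠ 0 from hdpos.ne')] at ht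
        linarith [ht.1, ht.2]
    set c : ℝ := s / d with hc
    have hc0 : 0 < c := div_pos hs.1 hdpos
    have hc1 : c < 1 := (div_lt_one hdpos).2 hsd
    have h1c : (0:ℝ) < 1 - c := by linarith
    have htle : |t| ≤ r * (1 - c) := by
      rw [abs_le]; constructor <;> [linarith [ht.1]; linarith [ht.2]]
    have hq : x + (t / (1 - c)) • v ∈ A := by
      apply hball
      simp only [Metric.mem_closedBall, dist_eq_norm]
      have : x + (t / (1 - c)) • v - x = (t / (1 - c)) • v := by abel
      have hvn : ‖v‖ = 1 := b.orthonormal.1 1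
      rw [this, norm_smul, hvn, mul_one, Real.norm_eq_abs,
        abs_div, abs_of_pos h1c, div_le_iff₀ h1c]
      linarith [htle]
    have hmem := hconv ha hq hc0.le h1c.le (by ring)
    have hd0 : d ≠ 0 := hdpos.ne'
    have h1c' : (1:ℝ) - s / d ≠ 0 := by rw [hc] at h1c; linarith
    have key : c • a + (1 - c) • (x + (t / (1 - c)) • v) = x + s • u + t • v := by
      rw [hax, hu, hc]
      have hds : d - s ≠ 0 := sub_ne_zero.2 hsd.ne'
      match_scalars <;> (field_simp; try ring)
    rw [← key]; exact hmem
  -- volume of the triangle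
  have hint : ∀ h : ℝ → ℝ, Continuous h → IntegrableOn h (Ioc 0 d) volume := by
    intro h hc
    exact hc.integrableOn_Ioc
  have hfc : Continuous f := by rw [hf]; fun_prop
  have hgc : Continuous g := by rw [hg]; fun_prop
  have hvolT : (volume : Measure (ℝ × ℝ)) T = ENNReal.ofReal (r * d) := by
    rw [hT, Measure.volume_eq_prod, volume_regionBetween_eq_integral (hint f hfc) (hint g hgc)
      measurableSet_Ioc (fun s hs => by
        simp only [hf, hg]
        have : 0 ≤ 1 - s / d := by
          rw [sub_nonneg, div_le_one hdpos]; exact hs.2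
        nlinarith [hr.le])]
    congr 1
    have : ∀ s, (g - f) s = 2 * r - 2 * r / d * s := by
      intro s; simp only [Pi.sub_apply, hf, hg]; field_simp; ring
    rw [setIntegral_congr_fun measurableSet_Ioc (fun s _ => this s),
      ← intervalIntegral.integral_of_le hdpos.le]
    rw [intervalIntegral.integral_sub (g := fun s => 2 * r / d * s) intervalIntegrable_const
      ((continuous_const.mul continuous_id').intervalIntegrable _ _)]
    rw [intervalIntegral.integral_const, intervalIntegral.integral_const_mul, integral_id]
    have hd0 : d ≠ 0 := hdpos.ne'
    field_simp
    ring
  calc ENNReal.ofReal (r * d) = volume T := hvolT.symm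
    _ ≤ volume (G ⁻¹' A) := measure_mono hsub
    _ = volume A := hGmp.measure_preimage hm.nullMeasurableSet
end
end
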